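/- Let C be a symmetric monoidal additive category and U(M) ⊆ C(M)ˣ × Kˣ the unitary group construction U(M) = {(φ,λ) | φ ρ_M(φ) = λ}. If M and N are objects with Hom(M,N) = Hom(N,M) = 0, and the polarization of M ⊕ N is the direct sum of polarizations of M and N, then the inclusion End ω(M) × End ω(N) ↪ End ω(M ⊕ N) induces a group isomorphism U(M) ×_{K^×} U(N) ≅ U(M ⊕ N), where the fibre product is over the second projections to Kˣ. -/
import Mathlib


/-- The "unitary group" (as a set of pairs), cf. \eqref{eq0.4} and Lemma 6.4 of
"Chow-Lefschetz motives": pairs `(φ, λ)` with `φ` a unit lying in the centralizer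
`C = C(R)` of `R` and `φ · ρ(φ) = λ • 1`, where `ρ` is the Rosati involution. -/
def UnitarySet {K A : Type*} [Field K] [Ring A] [Algebra K A]
    (R : Subalgebra K A) (τ : A → A) : Set (Aˣ × Kˣ) :=
  {p | (↑p.1 : A) ∈ Subalgebra.centralizer K (R : Set A) ∧
    (↑p.1 : A) * τ (↑p.1 : A) = (↑p.2 : K) • (1 : A)}


section Aux

variable {K V W : Type*} [Field K] [AddCommGroup V] [Module K V]
  [AddCommGroup W] [Module K W]

lemma prodMapAlgHom_injective : Function.Injective
    (fun fg : Module.End K V × Module.End K W => LinearMap.prodMapAlgHom K V W fg) := by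
  rintro ⟨a, b⟩ ⟨c, d⟩ h
  simp only [Prod.mk.injEq]
  constructor
  · ext v
    have := LinearMap.congr_fun h (v, 0)
    simpa using congrArg Prod.fst this
  · ext w
    have := LinearMap.congr_fun h (0, w)
    simpa using congrArg Prod.snd this

lemma block_diag (u : Module.End K (V × W))
    (h : LinearMap.prodMapAlgHom K V W (1, 0) * u
       = u * LinearMap.prodMapAlgHom K V W (1, 0)) :
    u = LinearMap.prodMapAlgHom K V W
      (LinearMap.fst K V W ∘ₗ u ∘ₗ LinearMap.inl K V W,
       LinearMap.snd K V W ∘ₗ u ∘ₗ LinearMap.inr K V W) := by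
  have key : ∀ x : V × W, u (x.1, 0) = ((u x).1, (0 : W)) := by
    intro x
    have := LinearMap.congr_fun h x
    simpa using this.symm
  apply LinearMap.ext
  rintro ⟨v, w⟩
  have h1 := key (v, w)
  have h0 : (u (v, 0)).2 = 0 := congrArg Prod.snd (key (v, 0))
  have hadd : u (v, w) = u (v, 0) + u (0, w) := by
    rw [← map_add]; norm_num
  apply Prod.ext
  · simpa using (congrArg Prod.fst h1).symm
  · simp only [LinearMap.prodMapAlgHom_apply_apply, LinearMap.prodMap_apply, LinearMap.comp_apply,
      LinearMap.fst_apply, LinearMap.snd_apply, LinearMap.inl_apply, LinearMap.inr_apply]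
    rw [hadd]
    simp [h0]
end Aux

/-- Proposition 7.4 (p5.1, second isomorphism) of "Chow-Lefschetz motives", after
applying the fibre functor: if `Hom(M, N) = Hom(N, M) = 0` — so that the image of
`End(M ⊕ N)` is the block-diagonal subalgebra `R₁ × R₂` of `End(ω M ⊕ ω N)` — and the
polarisation of `M ⊕ N` is the direct sum of those of `M` and `N` (so the Rosati
involution `τ` of the sum restricts blockwise to `τ₁` and `τ₂`), then the block-diagonal
inclusion `End ω(M) × End ω(N) ↪ End ω(M ⊕ N)` induces a group isomorphism
`U(M) ×_{Kˣ} U(N) ≅ U(M ⊕ N)` (fibre product over the second projections to `Kˣ`). -/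
theorem unitary_prod_iso (K V W : Type*) [Field K]
    [AddCommGroup V] [Module K V] [AddCommGroup W] [Module K W]
    (R₁ : Subalgebra K (Module.End K V)) (R₂ : Subalgebra K (Module.End K W))
    (τ1 : Module.End K V → Module.End K V) (τ2 : Module.End K W → Module.End K W)
    (τ12 : Module.End K (V × W) → Module.End K (V × W))
    (h1anti : ∀ a b, τ1 (a * b) = τ1 b * τ1 a) (h1inv : ∀ a, τ1 (τ1 a) = a)
    (h2anti : ∀ a b, τ2 (a * b) = τ2 b * τ2 a) (h2inv : ∀ a, τ2 (τ2 a) = a)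
    (h12anti : ∀ a b, τ12 (a * b) = τ12 b * τ12 a) (h12inv : ∀ a, τ12 (τ12 a) = a)
    (hcompat : ∀ f g, τ12 (LinearMap.prodMapAlgHom K V W (f, g)) =
      LinearMap.prodMapAlgHom K V W (τ1 f, τ2 g)) :
    (∀ p ∈ UnitarySet R₁ τ1, ∀ q ∈ UnitarySet R₂ τ2, p.2 = q.2 →
      ∃ u ∈ UnitarySet (Subalgebra.map (LinearMap.prodMapAlgHom K V W)
          (R₁.prod R₂)) τ12,
        (↑u.1 : Module.End K (V × W)) = LinearMap.prodMapAlgHom K V W (↑p.1, ↑q.1) ∧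
        u.2 = p.2) ∧
    (∀ u ∈ UnitarySet (Subalgebra.map (LinearMap.prodMapAlgHom K V W)
        (R₁.prod R₂)) τ12,
      ∃ p ∈ UnitarySet R₁ τ1, ∃ q ∈ UnitarySet R₂ τ2, p.2 = u.2 ∧ q.2 = u.2 ∧
        (↑u.1 : Module.End K (V × W)) = LinearMap.prodMapAlgHom K V W (↑p.1, ↑q.1)) ∧
    Function.Injective
      (fun fg : Module.End K V × Module.End K W => LinearMap.prodMapAlgHom K V W fg) := by
  set F := LinearMap.prodMapAlgHom K V W with hF
  have hinj : Function.Injective (fun fg : Module.End K V × Module.End K W => F fg) :=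
    prodMapAlgHom_injective
  have hsmul : ∀ lam : K, F (lam • (1 : Module.End K V × Module.End K W)) = lam • 1 := by
    intro lam; rw [map_smul, map_one]
  refine ⟨?_, ?_, hinj⟩
  · rintro p ⟨hpC, hpτ⟩ q ⟨hqC, hqτ⟩ hpq
    refine ⟨(⟨F (↑p.1, ↑q.1), F (↑p.1⁻¹, ↑q.1⁻¹), ?_, ?_⟩, p.2), ⟨?_, ?_⟩, rfl, rfl⟩
    · rw [← map_mul]
      have h : (((↑p.1, ↑q.1) : Module.End K V × Module.End K W) *
          ((↑p.1⁻¹, ↑q.1⁻¹) : Module.End K V × Module.End K W)) = 1 :=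
        Prod.ext (by simp) (by simp)
      rw [h, map_one]
    · rw [← map_mul]
      have h : (((↑p.1⁻¹, ↑q.1⁻¹) : Module.End K V × Module.End K W) *
          ((↑p.1, ↑q.1) : Module.End K V × Module.End K W)) = 1 :=
        Prod.ext (by simp) (by simp)
      rw [h, map_one]
    · rw [Subalgebra.mem_centralizer_iff]
      rintro x ⟨⟨r₁, r₂⟩, hr, rfl⟩
      show F (r₁, r₂) * F (↑p.1, ↑q.1) = F (↑p.1, ↑q.1) * F (r₁, r₂)
      rw [← map_mul, ← map_mul]
      congr 1
      have h1 := (Subalgebra.mem_centralizer_iff K).mp hpC r₁ hr.1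
      have h2 := (Subalgebra.mem_centralizer_iff K).mp hqC r₂ hr.2
      exact Prod.ext h1 h2
    · show F (↑p.1, ↑q.1) * τ12 (F (↑p.1, ↑q.1)) = (↑p.2 : K) • 1
      rw [hcompat, ← map_mul, ← hsmul]
      congr 1
      refine Prod.ext ?_ ?_
      · exact hpτ
      · rw [hpq]; exact hqτ
  · rintro u ⟨huC, huτ⟩
    have he : F (1, 0) ∈ (Subalgebra.map F (R₁.prod R₂) : Set (Module.End K (V × W))) :=
      ⟨(1, 0), ⟨one_mem _, zero_mem _⟩, rfl⟩
    have hcomm : F (1, 0) * ↑u.1 = ↑u.1 * F (1, 0) :=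
      (Subalgebra.mem_centralizer_iff K).mp huC _ he
    set a : Module.End K V := LinearMap.fst K V W ∘ₗ ↑u.1 ∘ₗ LinearMap.inl K V W with ha
    set b : Module.End K W := LinearMap.snd K V W ∘ₗ ↑u.1 ∘ₗ LinearMap.inr K V W with hb
    have hu1 : (↑u.1 : Module.End K (V × W)) = F (a, b) := block_diag _ hcomm
    have hcomm' : F (1, 0) * (↑u.1⁻¹ : Module.End K (V × W)) = ↑u.1⁻¹ * F (1, 0) := by
      have h3 : (↑u.1⁻¹ : Module.End K (V × W)) * (F (1, 0) * ↑u.1) * ↑u.1⁻¹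
          = ↑u.1⁻¹ * (↑u.1 * F (1, 0)) * ↑u.1⁻¹ := by rw [hcomm]
      simpa [mul_assoc] using h3.symm
    set c : Module.End K V := LinearMap.fst K V W ∘ₗ ↑u.1⁻¹ ∘ₗ LinearMap.inl K V W with hc
    set d : Module.End K W := LinearMap.snd K V W ∘ₗ ↑u.1⁻¹ ∘ₗ LinearMap.inr K V W with hd
    have hu1inv : (↑u.1⁻¹ : Module.End K (V × W)) = F (c, d) := block_diag _ hcomm'
    have hmul1 : ((a, b) * (c, d) : Module.End K V × Module.End K W) = 1 := by
      apply hinj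
      show F _ = F 1
      rw [map_mul, map_one, ← hu1, ← hu1inv, u.1.mul_inv]
    have hmul2 : ((c, d) * (a, b) : Module.End K V × Module.End K W) = 1 := by
      apply hinj
      show F _ = F 1
      rw [map_mul, map_one, ← hu1, ← hu1inv, u.1.inv_mul]
    have hac : a * c = 1 := congrArg Prod.fst hmul1
    have hca : c * a = 1 := congrArg Prod.fst hmul2
    have hbd : b * d = 1 := congrArg Prod.snd hmul1
    have hdb : d * b = 1 := congrArg Prod.snd hmul2
    have hτ : ((a, b) * (τ1 a, τ2 b) : Module.End K V × Module.End K W)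
        = (↑u.2 : K) • 1 := by
      apply hinj
      show F _ = F _
      rw [map_mul, hsmul, ← hcompat, ← hu1]
      exact huτ
    refine ⟨(⟨a, c, hac, hca⟩, u.2), ⟨?_, congrArg Prod.fst hτ⟩,
      (⟨b, d, hbd, hdb⟩, u.2), ⟨?_, congrArg Prod.snd hτ⟩, rfl, rfl, hu1⟩
    · rw [Subalgebra.mem_centralizer_iff]
      intro r hr
      have hrm : F (r, 1) ∈ (Subalgebra.map F (R₁.prod R₂) : Set (Module.End K (V × W))) :=
        ⟨(r, 1), ⟨hr, one_mem _⟩, rfl⟩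
      have hrc := (Subalgebra.mem_centralizer_iff K).mp huC _ hrm
      rw [hu1, ← map_mul, ← map_mul] at hrc
      exact congrArg Prod.fst (hinj hrc)
    · rw [Subalgebra.mem_centralizer_iff]
      intro r hr
      have hrm : F ((1 : Module.End K V), r) ∈
          (Subalgebra.map F (R₁.prod R₂) : Set (Module.End K (V × W))) :=
        ⟨(1, r), ⟨one_mem _, hr⟩, rfl⟩
      have hrc := (Subalgebra.mem_centralizer_iff K).mp huC _ hrm
      rw [hu1, ← map_mul, ← map_mul] at hrc
      exact congrArg Prod.snd (hinj hrc)
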